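/- Let M be a pairwise compatible finite family of 3-state characters on a finite set of taxa X, and let c be a character of M with two distinct dependent states i and j. Let a be a witness that state i of c is dependent and let b be a witness that state j of c is dependent. Then the subfamily {a, b, c} has no perfect phylogeny (i.e., {a, b, c} is an obstruction set for M). -/

import Mathlib

/-- A perfect phylogeny for a family of `k`-state characters `chars` (indexed by `F`)
on a finite set of taxa `X`: a finite tree `T` with a labeling `ℓ` of its vertices by
full state-assignments, such that every taxon's state-assignment occurs at some vertex,
and for each character and state the vertices carrying that state induce a connected
subgraph of `T`. -/
def PerfectPhylogeny {X F : Type} [Fintype X] [Fintype F] (k : ℕ)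
    (chars : F → X → Fin k) : Prop :=
  ∃ (V : Type) (_ : Fintype V) (T : SimpleGraph V) (ℓ : V → F → Fin k),
    T.IsTree ∧
    (∀ x : X, ∃ v : V, ∀ f : F, ℓ v f = chars f x) ∧
    ∀ (f : F) (s : Fin k), (T.induce {v : V | ℓ v f = s}).Preconnected

/-- Two characters `a, b` have a perfect phylogeny (as a two-member family). -/
def PairPP {X : Type} [Fintype X] (k : ℕ) (a b : X → Fin k) : Prop :=
  PerfectPhylogeny k ![a, b]

/-- The subfamily of `chars` indexed by the finite set `S` has a perfect phylogeny. -/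
def SubPP {X F : Type} [Fintype X] [Fintype F] (k : ℕ) (chars : F → X → Fin k)
    (S : Finset F) : Prop :=
  PerfectPhylogeny k (fun f : {x // x ∈ S} => chars f.1)

/-- A family of characters is pairwise compatible if every two of its characters
have a perfect phylogeny. -/
def PairwiseCompatible {X F : Type} [Fintype X] [Fintype F] (k : ℕ)
    (chars : F → X → Fin k) : Prop :=
  ∀ a b : F, a ≠ b → PairPP k (chars a) (chars b)

/-- The partition intersection graph of two characters `a, b`.  The vertex `(false, i)`
represents state `i` of `a` and `(true, j)` represents state `j` of `b`; there is an
edge between `(false, i)` and `(true, j)` exactly when some taxon has state `i` for `a`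
and state `j` for `b`, and no edges between vertices of the same character. -/
def pig {X : Type} {k : ℕ} (a b : X → Fin k) : SimpleGraph (Bool × Fin k) where
  Adj u v :=
    (u.1 = false ∧ v.1 = true ∧ ∃ x, a x = u.2 ∧ b x = v.2) ∨
    (u.1 = true ∧ v.1 = false ∧ ∃ x, a x = v.2 ∧ b x = u.2)
  symm := by
    constructor
    rintro ⟨ub, us⟩ ⟨vb, vs⟩ (⟨h1, h2, x, hx⟩ | ⟨h1, h2, x, hx⟩) <;>
      subst h1 <;> subst h2
    · exact Or.inr ⟨rfl, rfl, x, hx⟩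
    · exact Or.inl ⟨rfl, rfl, x, hx⟩
  loopless := by
    constructor
    rintro ⟨ub, us⟩ (⟨h1, h2, -⟩ | ⟨h1, h2, -⟩) <;> simp_all

/-- The binarized character `c(i)` of a 3-state character `c`: state `0` on taxa
where `c` has state `i`, and state `1` elsewhere. -/
def bin {X : Type} (c : X → Fin 3) (i : Fin 3) : X → Fin 2 :=
  fun x => if c x = i then 0 else 1

/-- State `i` of character `c` (of the family `chars`) is dependent: some character `d`
has two distinct states `j, k` such that `c(i)` is incompatible with both `d(j)` and `d(k)`. -/
def DependentState {X F : Type} [Fintype X] [Fintype F] [DecidableEq F] (chars : F → X → Fin 3)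
    (c : F) (i : Fin 3) : Prop :=
  ∃ (d : F) (j k : Fin 3), j ≠ k ∧
    ¬ PairPP 2 (bin (chars c) i) (bin (chars d) j) ∧
    ¬ PairPP 2 (bin (chars c) i) (bin (chars d) k)

/-- `d` is a witness that state `i` of `c` is dependent. -/
def WitnessOf {X F : Type} [Fintype X] [Fintype F] [DecidableEq F] (chars : F → X → Fin 3)
    (c : F) (i : Fin 3) (d : F) : Prop :=
  ∃ j k : Fin 3, j ≠ k ∧
    ¬ PairPP 2 (bin (chars c) i) (bin (chars d) j) ∧
    ¬ PairPP 2 (bin (chars c) i) (bin (chars d) k)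

/-- The graph `G` contains a path of length four (five pairwise distinct vertices,
four edges) whose middle vertex is `m`. -/
def HasPathLen4Mid {V : Type} (G : SimpleGraph V) (m : V) : Prop :=
  ∃ p : Fin 5 → V, Function.Injective p ∧
    (∀ t : Fin 4, G.Adj (p t.castSucc) (p t.succ)) ∧ p 2 = m

/-- Some taxon realizes the pair of states `(i, j)` for the pair of characters `(u, v)`. -/
def realizes {X : Type} (u v : X → Fin 3) (i j : Fin 3) : Prop :=
  ∃ t, u t = i ∧ v t = j


/- ### Auxiliary machinery for the proof of Statement 12 -/

section Obstruction

open SimpleGraph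

private def p3adj : Fin 3 → Fin 3 → Bool := fun u v =>
  (u = 0 && v = 1) || (u = 1 && v = 0) || (u = 1 && v = 2) || (u = 2 && v = 1)

private def P3 : SimpleGraph (Fin 3) where
  Adj u v := p3adj u v = true
  symm := by constructor; intro u v h; revert h; revert u v; decide
  loopless := by constructor; intro u h; revert h; revert u; decide

private instance : DecidableRel P3.Adj := fun _ _ => instDecidableEqBool _ _

private lemma P3_card : P3.edgeFinset.card ≤ 2 := by decide

private lemma P3_pre : P3.Preconnected := by
  have h01 : P3.Adj 0 1 := by decide
  have h12 : P3.Adj 1 2 := by decide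
  intro u v
  fin_cases u <;> fin_cases v
  · rfl
  · exact h01.reachable
  · exact h01.reachable.trans h12.reachable
  · exact h01.symm.reachable
  · rfl
  · exact h12.reachable
  · exact (h01.reachable.trans h12.reachable).symm
  · exact h12.symm.reachable
  · rfl

private lemma isAcyclic_of_card {V : Type} [Fintype V] [DecidableEq V] (G : SimpleGraph V)
    [DecidableRel G.Adj] (h : G.edgeFinset.card ≤ 2) : G.IsAcyclic := by
  intro v c hc
  have h3 := hc.three_le_length
  have hn : c.edges.Nodup := hc.edges_nodup
  have hlen : c.edges.length ≤ 2 := by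
    rw [← List.toFinset_card_of_nodup hn]
    refine le_trans (Finset.card_le_card ?_) h
    intro e he
    rw [SimpleGraph.mem_edgeFinset]
    exact c.edges_subset_edgeSet (List.mem_toFinset.mp he)
  rw [Walk.length_edges] at hlen
  omega

private lemma P3_tree : P3.IsTree := ⟨⟨P3_pre⟩, isAcyclic_of_card _ P3_card⟩

private lemma precon_pred {V : Type} (G : SimpleGraph V) (p : V → Prop)
    (h : ∀ x y, p x → p y → x ≠ y → G.Adj x y) :
    (G.induce (setOf p)).Preconnected := by
  rintro ⟨u, hu⟩ ⟨v, hv⟩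
  rcases eq_or_ne u v with rfl | hne
  · rfl
  · exact Adj.reachable (by exact h u v hu hv hne)

/-- If some gamete `(s0, t0)` is not realized, then the two binary characters
are compatible (converse of the four-gamete condition). -/
private lemma pairPP_of_missing {X : Type} [Fintype X] (u v : X → Fin 2) (s0 t0 : Fin 2)
    (h : ¬ ∃ x, u x = s0 ∧ v x = t0) : PairPP 2 u v := by
  classical
  refine ⟨Fin 3, inferInstance, P3,
    fun w f => if f = 0 then (if w = 0 then s0 else s0 + 1)
               else (if w = 2 then t0 else t0 + 1), P3_tree, ?_, ?_⟩
  · intro x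
    have h2 : ∀ z w : Fin 2, z ≠ w → z = w + 1 := by decide
    by_cases hu : u x = s0
    · have hv : v x ≠ t0 := fun hv => h ⟨x, hu, hv⟩
      exact ⟨0, by intro f; fin_cases f <;> simp [hu, h2 _ _ hv]⟩
    · by_cases hv : v x = t0
      · exact ⟨2, by intro f; fin_cases f <;> simp [hv, h2 _ _ hu]⟩
      · exact ⟨1, by intro f; fin_cases f <;> simp [h2 _ _ hu, h2 _ _ hv]⟩
  · intro f s
    apply precon_pred
    intro x y hx hy hne
    have key : ∀ s0 t0 s : Fin 2, ∀ f : Fin 2, ∀ x y : Fin 3,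
        (if f = 0 then (if x = 0 then s0 else s0 + 1)
          else (if x = 2 then t0 else t0 + 1)) = s →
        (if f = 0 then (if y = 0 then s0 else s0 + 1)
          else (if y = 2 then t0 else t0 + 1)) = s →
        x ≠ y → P3.Adj x y := by decide
    exact key s0 t0 s f x y hx hy hne

private lemma walk_crossing {V : Type} {G : SimpleGraph V} (P : V → Prop) :
    ∀ {u w : V} (_ : G.Walk u w), P u → ¬ P w → ∃ x y, G.Adj x y ∧ P x ∧ ¬ P y := by
  intro u w p
  induction p with
  | nil => exact fun hu hw => absurd hu hw
  | @cons u b _ h q ih =>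
    intro hu hw
    by_cases hb : P b
    · exact ih hb hw
    · exact ⟨u, b, h, hu, hb⟩

private lemma induced_crossing {V : Type} {T : SimpleGraph V} {S : Set V}
    (hpre : (T.induce S).Preconnected) (P : V → Prop) {u w : V}
    (hu : u ∈ S) (hw : w ∈ S) (hPu : P u) (hPw : ¬ P w) :
    ∃ x y, T.Adj x y ∧ x ∈ S ∧ y ∈ S ∧ P x ∧ ¬ P y := by
  obtain ⟨p⟩ := hpre ⟨u, hu⟩ ⟨w, hw⟩
  obtain ⟨x, y, hadj, hPx, hPy⟩ :=
    walk_crossing (fun z : S => P z.val) p hPu hPw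
  exact ⟨x.val, y.val, hadj, x.2, y.2, hPx, hPy⟩

private lemma reach_in_subgraph {V : Type} {T G' : SimpleGraph V} {S : Set V}
    (hpre : (T.induce S).Preconnected)
    (hadj : ∀ p q : V, p ∈ S → q ∈ S → T.Adj p q → G'.Adj p q)
    {u v : V} (hu : u ∈ S) (hv : v ∈ S) : G'.Reachable u v :=
  (hpre ⟨u, hu⟩ ⟨v, hv⟩).map ⟨fun z => z.val, fun {x y} h => hadj x.val y.val x.2 y.2 h⟩

private lemma no_detour {V : Type} {T : SimpleGraph V} (ht : T.IsTree) {x y : V}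
    (hxy : T.Adj x y) :
    ¬ (T \ SimpleGraph.fromEdgeSet {s(x, y)}).Reachable x y :=
  ((SimpleGraph.isBridge_iff).mp
    ((isAcyclic_iff_forall_adj_isBridge.mp ht.IsAcyclic) hxy))

private lemma del_adj {V : Type} {T : SimpleGraph V} {x y p q : V} (h : T.Adj p q)
    (hne : ¬ ((p = x ∧ q = y) ∨ (p = y ∧ q = x))) :
    (T \ SimpleGraph.fromEdgeSet {s(x, y)}).Adj p q := by
  rw [SimpleGraph.sdiff_adj, SimpleGraph.fromEdgeSet_adj]
  refine ⟨h, fun hc => hne ?_⟩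
  rw [Set.mem_singleton_iff, Sym2.eq_iff] at hc
  exact hc.1

/-- In a perfect phylogeny, the class of state `i` of `Lc` has boundary edges into two
distinct other classes, each boundary edge being monochromatic for `La`. -/
private lemma boundary {V : Type} {T : SimpleGraph V} (ht : T.IsTree)
    (Lc La : V → Fin 3) (i : Fin 3)
    (hLc : ∀ s : Fin 3, (T.induce {v | Lc v = s}).Preconnected)
    (hLa : ∀ s : Fin 3, (T.induce {v | La v = s}).Preconnected)
    {j1 k1 : Fin 3} (hjk : j1 ≠ k1)
    (g1 : ∃ v, Lc v = i ∧ La v = j1) (g2 : ∃ v, Lc v ≠ i ∧ La v = j1)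
    (g3 : ∃ v, Lc v = i ∧ La v = k1) (g4 : ∃ v, Lc v ≠ i ∧ La v = k1) :
    ∃ x1 y1 x2 y2, T.Adj x1 y1 ∧ T.Adj x2 y2 ∧ Lc x1 = i ∧ Lc x2 = i ∧
      Lc y1 ≠ i ∧ Lc y2 ≠ i ∧ Lc y1 ≠ Lc y2 := by
  obtain ⟨u1, hu1c, hu1a⟩ := g1
  obtain ⟨w1, hw1c, hw1a⟩ := g2
  obtain ⟨u2, hu2c, hu2a⟩ := g3
  obtain ⟨w2, hw2c, hw2a⟩ := g4
  obtain ⟨x1, y1, e1, hx1S, hy1S, hx1, hy1⟩ :=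
    induced_crossing (hLa j1) (fun v => Lc v = i) hu1a hw1a hu1c hw1c
  obtain ⟨x2, y2, e2, hx2S, hy2S, hx2, hy2⟩ :=
    induced_crossing (hLa k1) (fun v => Lc v = i) hu2a hw2a hu2c hw2c
  simp only [Set.mem_setOf_eq] at hx1S hy1S hx2S hy2S
  refine ⟨x1, y1, x2, y2, e1, e2, hx1, hx2, hy1, hy2, ?_⟩
  intro hm
  apply no_detour ht e1
  have r1 : (T \ SimpleGraph.fromEdgeSet {s(x1, y1)}).Reachable x1 x2 := by
    refine reach_in_subgraph (hLc i) ?_ hx1 hx2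
    intro p q hp hq hpq
    refine del_adj hpq ?_
    rintro (⟨rfl, rfl⟩ | ⟨rfl, rfl⟩)
    · exact hy1 hq
    · exact hy1 hp
  have r2 : (T \ SimpleGraph.fromEdgeSet {s(x1, y1)}).Adj x2 y2 := by
    refine del_adj e2 ?_
    rintro (⟨rfl, rfl⟩ | ⟨rfl, rfl⟩)
    · exact hjk (hx1S ▸ hx2S)
    · exact hy1 hx2
  have r3 : (T \ SimpleGraph.fromEdgeSet {s(x1, y1)}).Reachable y2 y1 := by
    refine reach_in_subgraph (hLc (Lc y1)) ?_ hm.symm rfl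
    intro p q hp hq hpq
    refine del_adj hpq ?_
    rintro (⟨rfl, rfl⟩ | ⟨rfl, rfl⟩)
    · exact hy1 (hp ▸ hx1)
    · exact hy1 (hq ▸ hx1)
  exact r1.trans (r2.reachable.trans r3)

private lemma bin_gamete {X : Type} [Fintype X] {c d : X → Fin 3} {i j1 : Fin 3}
    (h : ¬ PairPP 2 (bin c i) (bin d j1)) :
    (∃ x, c x = i ∧ d x = j1) ∧ (∃ x, c x ≠ i ∧ d x = j1) := by
  constructor
  · by_contra hc
    refine h (pairPP_of_missing _ _ 0 0 ?_)
    rintro ⟨x, hx1, hx2⟩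
    unfold bin at hx1 hx2
    refine hc ⟨x, ?_, ?_⟩
    · by_cases h1 : c x = i <;> simp [h1] at hx1 ⊢
    · by_cases h1 : d x = j1 <;> simp [h1] at hx2 ⊢
  · by_contra hc
    refine h (pairPP_of_missing _ _ 1 0 ?_)
    rintro ⟨x, hx1, hx2⟩
    unfold bin at hx1 hx2
    refine hc ⟨x, ?_, ?_⟩
    · by_cases h1 : c x = i <;> simp [h1] at hx1 ⊢
    · by_cases h1 : d x = j1 <;> simp [h1] at hx2 ⊢

end Obstruction

/-- if `a` witnesses dependent state `i` of `c` and `b` witnesses another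
dependent state `j` of `c`, then `{a, b, c}` is an obstruction set. -/
theorem witnesses_give_obstruction_set
    {X F : Type} [Fintype X] [Fintype F] [DecidableEq F] (chars : F → X → Fin 3)
    (hpc : PairwiseCompatible 3 chars) (c : F) (i j : Fin 3) (hij : i ≠ j)
    (a b : F) (ha : WitnessOf chars c i a) (hb : WitnessOf chars c j b) :
    ¬ SubPP 3 chars {a, b, c} := by
  rintro ⟨V, _, T, ℓ0, htree, htax, hconn⟩
  obtain ⟨j1, k1, hjk1, hI1, hI2⟩ := ha
  obtain ⟨j2, k2, hjk2, hJ1, hJ2⟩ := hb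
  have haM : a ∈ ({a, b, c} : Finset F) := by simp
  have hbM : b ∈ ({a, b, c} : Finset F) := by simp
  have hcM : c ∈ ({a, b, c} : Finset F) := by simp
  have tovert : ∀ (d : F) (hd : d ∈ ({a, b, c} : Finset F)) (s t : Fin 3),
      (∃ x, chars c x = s ∧ chars d x = t) →
      ∃ v, ℓ0 v ⟨c, hcM⟩ = s ∧ ℓ0 v ⟨d, hd⟩ = t := by
    rintro d hd s t ⟨x, hx1, hx2⟩
    obtain ⟨v, hv⟩ := htax x
    exact ⟨v, (hv ⟨c, hcM⟩).trans hx1, (hv ⟨d, hd⟩).trans hx2⟩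
  have tovert' : ∀ (d : F) (hd : d ∈ ({a, b, c} : Finset F)) (s t : Fin 3),
      (∃ x, chars c x ≠ s ∧ chars d x = t) →
      ∃ v, ℓ0 v ⟨c, hcM⟩ ≠ s ∧ ℓ0 v ⟨d, hd⟩ = t := by
    rintro d hd s t ⟨x, hx1, hx2⟩
    obtain ⟨v, hv⟩ := htax x
    exact ⟨v, fun hc' => hx1 ((hv ⟨c, hcM⟩).symm.trans hc'), (hv ⟨d, hd⟩).trans hx2⟩
  obtain ⟨gA1, gA2⟩ := bin_gamete hI1
  obtain ⟨gA3, gA4⟩ := bin_gamete hI2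
  obtain ⟨gB1, gB2⟩ := bin_gamete hJ1
  obtain ⟨gB3, gB4⟩ := bin_gamete hJ2
  obtain ⟨x1, y1, x2, y2, e1, e2, hx1, hx2, hy1, hy2, hyne⟩ :=
    boundary htree (fun v => ℓ0 v ⟨c, hcM⟩) (fun v => ℓ0 v ⟨a, haM⟩) i
      (fun s => hconn ⟨c, hcM⟩ s) (fun s => hconn ⟨a, haM⟩ s) hjk1
      (tovert a haM i j1 gA1) (tovert' a haM i j1 gA2)
      (tovert a haM i k1 gA3) (tovert' a haM i k1 gA4)
  obtain ⟨x1', y1', x2', y2', e1', e2', hx1', hx2', hy1', hy2', hyne'⟩ :=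
    boundary htree (fun v => ℓ0 v ⟨c, hcM⟩) (fun v => ℓ0 v ⟨b, hbM⟩) j
      (fun s => hconn ⟨c, hcM⟩ s) (fun s => hconn ⟨b, hbM⟩ s) hjk2
      (tovert b hbM j j2 gB1) (tovert' b hbM j j2 gB2)
      (tovert b hbM j k2 gB3) (tovert' b hbM j k2 gB4)
  obtain ⟨m, hmi, hmj, htri⟩ :
      ∃ m : Fin 3, m ≠ i ∧ m ≠ j ∧ ∀ z : Fin 3, z = i ∨ z = j ∨ z = m := by
    have key : ∀ i j : Fin 3, i ≠ j →
        ∃ m : Fin 3, m ≠ i ∧ m ≠ j ∧ ∀ z : Fin 3, z = i ∨ z = j ∨ z = m := by decide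
    exact key i j hij
  -- from the first boundary: an edge C_i -- C_j and an edge C_i -- C_m
  obtain ⟨u3, v3, u1, v1, e3, eim, hu3, hv3, hu1, hv1⟩ :
      ∃ u3 v3 u1 v1, T.Adj u3 v3 ∧ T.Adj u1 v1 ∧
        ℓ0 u3 ⟨c, hcM⟩ = i ∧ ℓ0 v3 ⟨c, hcM⟩ = j ∧
        ℓ0 u1 ⟨c, hcM⟩ = i ∧ ℓ0 v1 ⟨c, hcM⟩ = m := by
    rcases htri (ℓ0 y1 ⟨c, hcM⟩) with h1 | h1 | h1
    · exact absurd h1 hy1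
    · have h2 : ℓ0 y2 ⟨c, hcM⟩ = m := by
        rcases htri (ℓ0 y2 ⟨c, hcM⟩) with h2 | h2 | h2
        · exact absurd h2 hy2
        · exact absurd (h1.trans h2.symm) hyne
        · exact h2
      exact ⟨x1, y1, x2, y2, e1, e2, hx1, h1, hx2, h2⟩
    · have h2 : ℓ0 y2 ⟨c, hcM⟩ = j := by
        rcases htri (ℓ0 y2 ⟨c, hcM⟩) with h2 | h2 | h2
        · exact absurd h2 hy2
        · exact h2
        · exact absurd (h1.trans h2.symm) hyne
      exact ⟨x2, y2, x1, y1, e2, e1, hx2, h2, hx1, h1⟩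
  -- from the second boundary: an edge C_j -- C_m
  obtain ⟨u2, v2, ejm, hu2, hv2⟩ :
      ∃ u2 v2, T.Adj u2 v2 ∧ ℓ0 u2 ⟨c, hcM⟩ = j ∧ ℓ0 v2 ⟨c, hcM⟩ = m := by
    rcases htri (ℓ0 y1' ⟨c, hcM⟩) with h1 | h1 | h1
    · have h2 : ℓ0 y2' ⟨c, hcM⟩ = m := by
        rcases htri (ℓ0 y2' ⟨c, hcM⟩) with h2 | h2 | h2
        · exact absurd (h1.trans h2.symm) hyne'
        · exact absurd h2 hy2'
        · exact h2
      exact ⟨x2', y2', e2', hx2', h2⟩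
    · exact absurd h1 hy1'
    · exact ⟨x1', y1', e1', hx1', h1⟩
  -- triangle of class edges contradicts acyclicity: delete the edge (u1, v1)
  apply no_detour htree eim
  have r1 : (T \ SimpleGraph.fromEdgeSet {s(u1, v1)}).Reachable u1 u3 := by
    refine reach_in_subgraph (hconn ⟨c, hcM⟩ i) ?_ hu1 hu3
    intro p q hp hq hpq
    refine del_adj hpq ?_
    rintro (⟨rfl, rfl⟩ | ⟨rfl, rfl⟩)
    · exact hmi (hv1 ▸ hq)
    · exact hmi (hv1 ▸ hp)
  have r2 : (T \ SimpleGraph.fromEdgeSet {s(u1, v1)}).Adj u3 v3 := by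
    refine del_adj e3 ?_
    rintro (⟨rfl, rfl⟩ | ⟨rfl, rfl⟩)
    · exact hmj (hv1 ▸ hv3)
    · exact hmi (hv1 ▸ hu3)
  have r3 : (T \ SimpleGraph.fromEdgeSet {s(u1, v1)}).Reachable v3 u2 := by
    refine reach_in_subgraph (hconn ⟨c, hcM⟩ j) ?_ hv3 hu2
    intro p q hp hq hpq
    simp only [Set.mem_setOf_eq] at hp hq
    refine del_adj hpq ?_
    rintro (⟨rfl, rfl⟩ | ⟨rfl, rfl⟩)
    · exact hij (hu1.symm.trans hp)
    · exact hmj (hv1.symm.trans hp)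
  have r4 : (T \ SimpleGraph.fromEdgeSet {s(u1, v1)}).Adj u2 v2 := by
    refine del_adj ejm ?_
    rintro (⟨rfl, rfl⟩ | ⟨rfl, rfl⟩)
    · exact hij (hu1.symm.trans hu2)
    · exact hmj (hv1 ▸ hu2)
  have r5 : (T \ SimpleGraph.fromEdgeSet {s(u1, v1)}).Reachable v2 v1 := by
    refine reach_in_subgraph (hconn ⟨c, hcM⟩ m) ?_ hv2 hv1
    intro p q hp hq hpq
    simp only [Set.mem_setOf_eq] at hp hq
    refine del_adj hpq ?_
    rintro (⟨rfl, rfl⟩ | ⟨rfl, rfl⟩)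
    · exact hmi (hp.symm.trans hu1)
    · exact hmi (hq.symm.trans hu1)
  exact r1.trans (r2.reachable.trans (r3.trans (r4.reachable.trans r5)))
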